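/- Let S ⊆ N^k be the set of nonnegative integer solutions of a system of finitely many linear Diophantine inequalities a_{i1}x_1 + ... + a_{ik}x_k + a_i ≥ 0 (i=1,...,m) with integer coefficients a_{ij}, a_i. Then the characteristic series χ_S(t_1,...,t_k) = Σ_{s∈S} t_1^{s_1}...t_k^{s_k} is a nice rational function. -/

import Mathlib

open scoped Classical

/-- The characteristic series of a subset of `ℕ^k`. -/
noncomputable def charSeries (k : ℕ) (S : Set (Fin k → ℕ)) :
    MvPowerSeries (Fin k) ℚ :=
  fun b => if (fun j => b j) ∈ S then 1 else 0

namespace Stmt9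

variable {k : ℕ}

noncomputable def chi (k : ℕ) (X : Set (Fin k →₀ ℕ)) : MvPowerSeries (Fin k) ℚ :=
  fun d => if d ∈ X then 1 else 0

lemma coeff_chi (X : Set (Fin k →₀ ℕ)) (d : Fin k →₀ ℕ) :
    MvPowerSeries.coeff d (chi k X) = if d ∈ X then 1 else 0 := rfl

noncomputable def Msp (G : List (Fin k →₀ ℕ)) : AddSubmonoid (Fin k →₀ ℕ) :=
  AddSubmonoid.closure {x | x ∈ G}

def Stab (G : List (Fin k →₀ ℕ)) (X : Set (Fin k →₀ ℕ)) : Prop :=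
  ∀ g ∈ G, ∀ x ∈ X, x + g ∈ X

lemma Stab.msp' {G : List (Fin k →₀ ℕ)} {X : Set (Fin k →₀ ℕ)} (h : Stab G X)
    {m : Fin k →₀ ℕ} (hm : m ∈ Msp G) : ∀ x ∈ X, x + m ∈ X := by
  induction hm using AddSubmonoid.closure_induction with
  | mem g hg => exact fun x hx => h g hg x hx
  | zero => simpa using fun x hx => hx
  | add y z hy hz hy' hz' => intro x hx; rw [← add_assoc]; exact hz' _ (hy' x hx)

lemma mem_msp_cons' {g : Fin k →₀ ℕ} {G : List (Fin k →₀ ℕ)} {m : Fin k →₀ ℕ}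
    (hm : m ∈ Msp (g :: G)) : ∃ n : ℕ, ∃ m' ∈ Msp G, m = n • g + m' := by
  have : m ∈ AddSubmonoid.closure ({g} ∪ {x | x ∈ G}) := by
    simpa [Msp, Set.union_def, List.mem_cons] using hm
  rw [AddSubmonoid.closure_union, AddSubmonoid.mem_sup] at this
  obtain ⟨y, hy, z, hz, hyz⟩ := this
  rw [AddSubmonoid.mem_closure_singleton] at hy
  obtain ⟨n, rfl⟩ := hy
  exact ⟨n, z, hz, hyz.symm⟩

/-- the key telescoping identity -/
lemma chi_mul_one_sub' (S T : Set (Fin k →₀ ℕ)) (g : Fin k →₀ ℕ)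
    (hSg : ∀ s ∈ S, s + g ∈ S) (hTg : ∀ t ∈ T, t + g ∈ T) :
    chi k (S \ T) * (1 - MvPowerSeries.monomial g (1:ℚ))
      = chi k (S \ (T ∪ {d | ∃ s ∈ S, d = s + g}))
        - MvPowerSeries.monomial g (1:ℚ) * chi k ({s ∈ S | s + g ∈ T} \ T) := by
  ext d
  rw [mul_sub, mul_one]
  simp only [map_sub, coeff_chi, MvPowerSeries.coeff_mul_monomial,
    MvPowerSeries.coeff_monomial_mul, one_mul, mul_one, coeff_chi]
  by_cases hgd : g ≤ d
  · have hd : d - g + g = d := tsub_add_cancel_of_le hgd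
    by_cases he : d - g ∈ S \ T
    · have hdgS : d ∈ {d | ∃ s ∈ S, d = s + g} := ⟨d - g, he.1, hd.symm⟩
      have hdS : d ∈ S := by rw [← hd]; exact hSg _ he.1
      simp only [if_pos hgd, coeff_chi]
      by_cases hdT : d ∈ T
      · simp [Set.mem_diff, he.1, he.2, hd, hdT, hdgS, hdS]
      · simp [Set.mem_diff, he.1, he.2, hd, hdT, hdgS, hdS]
    · -- d - g ∉ S \ T
      have h2 : d - g ∉ {s ∈ S | s + g ∈ T} \ T := by
        rintro ⟨⟨h1, _⟩, h3⟩; exact he ⟨h1, h3⟩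
      by_cases hdD : d ∈ S \ T
      · have : d ∉ {d | ∃ s ∈ S, d = s + g} := by
          rintro ⟨s, hs, rfl⟩
          have hsT : s ∉ T := fun h => hdD.2 (hTg _ h)
          have hse : s + g - g = s := by simp
          exact he (by rw [hse]; exact ⟨hs, hsT⟩)
        simp [hgd, Set.mem_diff, hdD.1, hdD.2, he, h2, this]
      · have : d ∉ S \ (T ∪ {d | ∃ s ∈ S, d = s + g}) := by
          rintro ⟨h1, h2'⟩
          exact hdD ⟨h1, fun ht => h2' (Or.inl ht)⟩
        simp [hgd, Set.mem_diff, hdD, he, h2, this]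
  · have : d ∉ {d | ∃ s ∈ S, d = s + g} := by
      rintro ⟨s, hs, rfl⟩; exact hgd le_add_self
    simp [hgd, Set.mem_diff, this]

lemma chi_finite' (X : Set (Fin k →₀ ℕ)) (F : Finset (Fin k →₀ ℕ)) (hX : X ⊆ ↑F) :
    ∃ P : MvPolynomial (Fin k) ℚ, chi k X = ↑P := by
  refine ⟨∑ d ∈ F.filter (· ∈ X), MvPolynomial.monomial d 1, ?_⟩
  ext d
  rw [coeff_chi, MvPolynomial.coeff_coe, MvPolynomial.coeff_sum]
  simp only [MvPolynomial.coeff_monomial]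
  rw [Finset.sum_ite_eq' (F.filter (· ∈ X)) d (fun _ => (1:ℚ))]
  simp only [Finset.mem_filter]
  by_cases h : d ∈ X
  · simp [h, Finset.mem_coe.mp (hX h)]
  · simp [h]

/-- From a PWO embedding, get a finite "Dickson basis". -/
lemma exists_basis' {D' E : Type*} [PartialOrder E] (s : Set D') (e : D' → E)
    (hpwo : (e '' s).IsPWO) :
    ∃ F : Finset D', ↑F ⊆ s ∧ ∀ x ∈ s, ∃ f ∈ F, e f ≤ e x := by
  set Min : Set E := {z ∈ e '' s | ∀ y ∈ e '' s, y ≤ z → y = z} with hMin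
  have hMinsub : Min ⊆ e '' s := fun z hz => hz.1
  have hanti : IsAntichain (· ≤ ·) Min := by
    rintro x hx y hy hxy hle
    exact hxy (hy.2 x hx.1 hle)
  have hMinfin : Min.Finite :=
    hanti.finite_of_partiallyWellOrderedOn (hpwo.mono hMinsub)
  -- coverage: every z in e '' s has a minimal element below it
  have hcover : ∀ z ∈ e '' s, ∃ w ∈ Min, w ≤ z := by
    intro z hz
    have hwf : {y ∈ e '' s | y ≤ z}.IsWF := (hpwo.mono (Set.sep_subset _ _)).isWF
    have hne : {y ∈ e '' s | y ≤ z}.Nonempty := ⟨z, hz, le_rfl⟩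
    have ha := hwf.min_mem hne
    have hmin : ∀ b ∈ {y ∈ e '' s | y ≤ z}, ¬ b < hwf.min hne := fun b hb => hwf.not_lt_min hne hb
    set a := hwf.min hne with haa
    refine ⟨a, ⟨ha.1, fun y hy hya => ?_⟩, ha.2⟩
    by_contra hne'
    exact hmin y ⟨hy, hya.trans ha.2⟩ (lt_of_le_of_ne hya hne')
  -- choose preimages of the finitely many minimal elements
  have hsub : ↑hMinfin.toFinset ⊆ e '' s := by
    intro z hz; exact hMinsub (hMinfin.mem_toFinset.mp hz)
  rw [Finset.subset_set_image_iff] at hsub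
  obtain ⟨F, hFs, hFim⟩ := hsub
  refine ⟨F, hFs, fun x hx => ?_⟩
  obtain ⟨w, hw, hwle⟩ := hcover (e x) ⟨x, hx, rfl⟩
  have : w ∈ Finset.image e F := hFim ▸ hMinfin.mem_toFinset.mpr hw
  obtain ⟨f, hf, rfl⟩ := Finset.mem_image.mp this
  exact ⟨f, hf, hwle⟩

lemma fg_ker' (G : List (Fin k →₀ ℕ)) (S T U : Set (Fin k →₀ ℕ)) (F : Finset (Fin k →₀ ℕ))
    (hUS : U ⊆ S) (hT : Stab G T)
    (hcov : ∀ s ∈ S, s ∈ T ∨ ∃ f ∈ F, ∃ m ∈ Msp G, s = f + m) :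
    ∃ F' : Finset (Fin k →₀ ℕ), ↑F' ⊆ U ∧
      ∀ u ∈ U, u ∈ T ∨ ∃ f ∈ F', ∃ m ∈ Msp G, u = f + m := by
  set R := MvPolynomial (Fin k) ℚ with hR
  set n := G.length with hn
  set B := MvPolynomial (Fin n) ℚ with hB
  set φ : B →ₐ[ℚ] R := MvPolynomial.aeval (fun i => MvPolynomial.monomial (G.get i) (1:ℚ)) with hφ
  letI : Module B R := Module.compHom R (φ : B →+* R)
  have hsmul : ∀ (b : B) (p : R), b • p = φ b * p := fun _ _ => rfl
  -- support of φ b lies in the monoid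
  have phiSupp : ∀ b : B, ∀ d ∈ (φ b).support, d ∈ Msp G := by
    intro b
    induction b using MvPolynomial.induction_on with
    | C a =>
      intro d hd
      rw [MvPolynomial.aeval_C] at hd
      have : (algebraMap ℚ R a) = MvPolynomial.monomial 0 a := by
        rw [MvPolynomial.algebraMap_eq, MvPolynomial.C_apply]
      rw [this] at hd
      have := MvPolynomial.support_monomial_subset hd
      simp only [Finset.mem_singleton] at this
      rw [this]; exact zero_mem _
    | add p q hp hq =>
      intro d hd
      rw [map_add] at hd
      rcases Finset.mem_union.mp (MvPolynomial.support_add hd) with h | h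
      · exact hp d h
      · exact hq d h
    | mul_X p i hp =>
      intro d hd
      rw [map_mul, MvPolynomial.aeval_X] at hd
      obtain ⟨x, hx, y, hy, rfl⟩ := Finset.mem_add.mp (MvPolynomial.support_mul _ _ hd)
      have hy' := MvPolynomial.support_monomial_subset hy
      simp only [Finset.mem_singleton] at hy'
      rw [hy']
      exact add_mem (hp x hx) (AddSubmonoid.subset_closure (show G.get i ∈ {x | x ∈ G} from G.get_mem _))
  -- monomials with exponent in the monoid are hit by φ
  have monB : ∀ m ∈ Msp G, ∃ b : B, φ b = MvPolynomial.monomial m 1 := by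
    intro m hm
    induction hm using AddSubmonoid.closure_induction with
    | mem g hg =>
      obtain ⟨i, hi⟩ := List.mem_iff_get.mp hg
      exact ⟨MvPolynomial.X i, by rw [MvPolynomial.aeval_X, hi]⟩
    | zero => exact ⟨1, by rw [map_one]; simp [MvPolynomial.monomial_zero']⟩
    | add x y hx hy ihx ihy =>
      obtain ⟨b, hb⟩ := ihx
      obtain ⟨b', hb'⟩ := ihy
      exact ⟨b * b', by rw [map_mul, hb, hb', MvPolynomial.monomial_mul, mul_one]⟩
  -- support of elements of a B-span of monomials
  have suppB : ∀ (X : Set (Fin k →₀ ℕ)) (p : R),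
      p ∈ Submodule.span B ((fun d => (MvPolynomial.monomial d (1:ℚ) : R)) '' X) →
      ∀ d ∈ p.support, ∃ x ∈ X, ∃ m' ∈ Msp G, d = x + m' := by
    intro X p hp
    induction hp using Submodule.span_induction with
    | mem p hp =>
      obtain ⟨x, hx, rfl⟩ := hp
      intro d hd
      have := MvPolynomial.support_monomial_subset hd
      simp only [Finset.mem_singleton] at this
      exact ⟨x, hx, 0, zero_mem _, by rw [this, add_zero]⟩
    | zero => simp
    | add p q hp hq ihp ihq =>
      intro d hd
      rcases Finset.mem_union.mp (MvPolynomial.support_add hd) with h | h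
      · exact ihp d h
      · exact ihq d h
    | smul b p hp ih =>
      intro d hd
      rw [hsmul] at hd
      obtain ⟨x, hx, y, hy, rfl⟩ := Finset.mem_add.mp (MvPolynomial.support_mul _ _ hd)
      obtain ⟨t, ht, m', hm', rfl⟩ := ih y hy
      exact ⟨t, ht, m' + x, add_mem hm' (phiSupp b x hx),
        by rw [add_comm x, add_assoc]⟩
  set monMap : (Fin k →₀ ℕ) → R := fun d => (MvPolynomial.monomial d (1:ℚ) : R) with hmonMap
  set W' : Submodule B R := Submodule.span B (monMap '' T) with hW'
  set π : R →ₗ[B] (R ⧸ W') := W'.mkQ with hπ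
  set e : (Fin k →₀ ℕ) → (R ⧸ W') := fun d => π (monMap d) with he
  set M' : Submodule B (R ⧸ W') := Submodule.span B (e '' ↑F) with hM'
  have hM'fg : M'.FG := Submodule.fg_span ((F.finite_toSet).image e)
  set K : Submodule B (R ⧸ W') := Submodule.span B (e '' U) with hK
  have hKM : K ≤ M' := by
    rw [hK, Submodule.span_le]
    rintro q ⟨u, hu, rfl⟩
    rcases hcov u (hUS hu) with huT | ⟨f, hf, m, hm, rfl⟩
    · have h0 : monMap u ∈ W' := Submodule.subset_span ⟨u, huT, rfl⟩
      have h1 : e u = 0 := (Submodule.Quotient.mk_eq_zero W').mpr h0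
      rw [h1]; exact zero_mem _
    · obtain ⟨b, hb⟩ := monB m hm
      have hmm : monMap (f + m) = b • monMap f := by
        rw [hsmul, hb]
        simp only [hmonMap]
        rw [MvPolynomial.monomial_mul, one_mul, add_comm]
      have : e (f + m) = b • e f := by rw [he]; simp only; rw [hmm, map_smul]
      rw [this]
      exact Submodule.smul_mem _ b (Submodule.subset_span ⟨f, hf, rfl⟩)
  haveI hNoeth : IsNoetherian B M' := isNoetherian_of_fg_of_noetherian M' hM'fg
  have hKfg : K.FG := by
    have h1 : (K.comap M'.subtype).FG := IsNoetherian.noetherian _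
    have h2 : Submodule.map M'.subtype (K.comap M'.subtype) = K := by
      rw [Submodule.map_comap_subtype, inf_eq_right.mpr hKM]
    rw [← h2]; exact h1.map _
  obtain ⟨Z, hZ⟩ := hKfg
  have hzmem : ∀ z ∈ Z, ∃ Yz : Finset (R ⧸ W'), ↑Yz ⊆ e '' U ∧
      z ∈ Submodule.span B (↑Yz : Set (R ⧸ W')) := by
    intro z hz
    have hzK : z ∈ Submodule.span B (e '' U) := by
      rw [← hK]; rw [← hZ]; exact Submodule.subset_span hz
    exact Submodule.mem_span_finite_of_mem_span hzK
  choose Y hY1 hY2 using hzmem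
  set Ytot : Finset (R ⧸ W') := Z.attach.biUnion (fun z => Y z z.2) with hYtot
  have hYsub : ↑Ytot ⊆ e '' U := by
    intro q hq
    obtain ⟨z, _, hq'⟩ := Finset.mem_biUnion.mp hq
    exact hY1 z z.2 hq'
  have hKle : K ≤ Submodule.span B (↑Ytot : Set (R ⧸ W')) := by
    rw [← hZ, Submodule.span_le]
    intro z hz
    refine Submodule.span_mono ?_ (hY2 z hz)
    intro q hq
    exact Finset.mem_coe.mpr (Finset.mem_biUnion.mpr ⟨⟨z, hz⟩, Finset.mem_attach _ _, hq⟩)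
  rw [Finset.subset_set_image_iff] at hYsub
  obtain ⟨F', hF'U, hF'im⟩ := hYsub
  refine ⟨F', hF'U, fun u hu => ?_⟩
  by_cases huT : u ∈ T
  · exact Or.inl huT
  right
  have h1 : e u ∈ Submodule.span B (e '' ↑F') := by
    have hk : e u ∈ K := Submodule.subset_span ⟨u, hu, rfl⟩
    have := hKle hk
    rwa [← hF'im, Finset.coe_image] at this
  have h2 : e u ∈ Submodule.map π (Submodule.span B (monMap '' ↑F')) := by
    rw [← Submodule.span_image, Set.image_image]
    exact h1
  obtain ⟨w, hw, hwu⟩ := h2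
  have hker : monMap u - w ∈ W' := by
    rw [← Submodule.ker_mkQ W', LinearMap.mem_ker, map_sub]
    rw [show π w = e u from hwu]
    rw [he]; simp only [hπ, Submodule.mkQ_apply, sub_self]
  have huns : u ∉ (monMap u - w).support := by
    intro hmem
    obtain ⟨t, ht, m', hm', heq⟩ := suppB T _ hker u hmem
    exact huT (by rw [heq]; exact hT.msp' hm' t ht)
  have hcoeff : MvPolynomial.coeff u w = 1 := by
    have h0 : MvPolynomial.coeff u (monMap u - w) = 0 := MvPolynomial.notMem_support_iff.mp huns
    have h3 : MvPolynomial.coeff u (monMap u) = 1 := by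
      simp [hmonMap, MvPolynomial.coeff_monomial]
    rw [MvPolynomial.coeff_sub, h3] at h0
    linarith
  have husupp : u ∈ w.support :=
    MvPolynomial.mem_support_iff.mpr (by rw [hcoeff]; exact one_ne_zero)
  obtain ⟨f, hf, m', hm', heq⟩ := suppB ↑F' w hw u husupp
  exact ⟨f, hf, m', hm', heq⟩

lemma msp_mono {G : List (Fin k →₀ ℕ)} {g : Fin k →₀ ℕ} : Msp G ≤ Msp (g :: G) :=
  AddSubmonoid.closure_mono (fun x hx => List.mem_cons_of_mem _ hx)

theorem main : ∀ (G : List (Fin k →₀ ℕ)) (S T : Set (Fin k →₀ ℕ)) (F : Finset (Fin k →₀ ℕ)),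
    T ⊆ S → Stab G S → Stab G T → ↑F ⊆ S →
    (∀ s ∈ S, s ∈ T ∨ ∃ f ∈ F, ∃ m ∈ Msp G, s = f + m) →
    ∃ P : MvPolynomial (Fin k) ℚ,
      chi k (S \ T) * (G.map (fun g => 1 - MvPowerSeries.monomial g (1:ℚ))).prod = ↑P := by
  intro G
  induction G with
  | nil =>
    intro S T F hTS hS hT hFS hcov
    have hsub : S \ T ⊆ ↑F := by
      rintro s ⟨hsS, hsT⟩
      rcases hcov s hsS with h | ⟨f, hf, m, hm, rfl⟩
      · exact absurd h hsT
      · have : m = 0 := by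
          have : m ∈ (⊥ : AddSubmonoid (Fin k →₀ ℕ)) := by
            rwa [Msp, show {x : Fin k →₀ ℕ | x ∈ ([] : List (Fin k →₀ ℕ))} = ∅ by
              ext x; simp, AddSubmonoid.closure_empty] at hm
          simpa using this
        rw [this, add_zero]
        exact hf
    obtain ⟨P, hP⟩ := chi_finite' _ F hsub
    exact ⟨P, by simpa using hP⟩
  | cons g G ih =>
    intro S T F hTS hS hT hFS hcov
    set T' : Set (Fin k →₀ ℕ) := T ∪ {d | ∃ s ∈ S, d = s + g} with hT'
    set U : Set (Fin k →₀ ℕ) := {s ∈ S | s + g ∈ T} with hU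
    have hSg : ∀ s ∈ S, s + g ∈ S := fun s hs => hS g (List.mem_cons_self) s hs
    have hTg : ∀ t ∈ T, t + g ∈ T := fun t ht => hT g (List.mem_cons_self) t ht
    have hStail : Stab G S := fun h hh => hS h (List.mem_cons_of_mem _ hh)
    have hTtail : Stab G T := fun h hh => hT h (List.mem_cons_of_mem _ hh)
    -- first pair (S, T')
    have hT'S : T' ⊆ S := by
      rintro d (hd | ⟨s, hs, rfl⟩)
      · exact hTS hd
      · exact hSg s hs
    have hT'stab : Stab G T' := by
      rintro h hh d (hd | ⟨s, hs, rfl⟩)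
      · exact Or.inl (hTtail h hh d hd)
      · exact Or.inr ⟨s + h, hStail h hh s hs, by abel⟩
    have hcov1 : ∀ s ∈ S, s ∈ T' ∨ ∃ f ∈ F, ∃ m ∈ Msp G, s = f + m := by
      intro s hs
      rcases hcov s hs with h | ⟨f, hf, m, hm, rfl⟩
      · exact Or.inl (Or.inl h)
      · obtain ⟨n, m', hm', rfl⟩ := mem_msp_cons' hm
        cases n with
        | zero => exact Or.inr ⟨f, hf, m', hm', by rw [zero_smul, zero_add]⟩
        | succ n' =>
          left; right
          have hgmem : g ∈ Msp (g :: G) :=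
            AddSubmonoid.subset_closure (List.mem_cons_self)
          refine ⟨f + (n' • g + m'), ?_, by rw [succ_nsmul]; abel⟩
          exact Stab.msp' hS (add_mem (nsmul_mem hgmem n')
            (msp_mono hm')) f (hFS hf)
    obtain ⟨P₁, hP₁⟩ := ih S T' F hT'S hStail hT'stab hFS hcov1
    -- second pair (U ∪ T, T)
    obtain ⟨F', hF'U, hcovU⟩ := fg_ker' (g :: G) S T U F (fun u hu => hu.1) hT hcov
    have hUT'S : Stab G (U ∪ T) := by
      rintro h hh d (⟨hdS, hdT⟩ | hd)
      · exact Or.inl ⟨hStail h hh d hdS, by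
          have : d + h + g = d + g + h := by abel
          rw [this]; exact hTtail h hh _ hdT⟩
      · exact Or.inr (hTtail h hh d hd)
    have hcov2 : ∀ s ∈ U ∪ T, s ∈ T ∨ ∃ f ∈ F', ∃ m ∈ Msp G, s = f + m := by
      rintro s (hsU | hsT)
      · rcases hcovU s hsU with h | ⟨f, hf, m, hm, rfl⟩
        · exact Or.inl h
        · obtain ⟨n, m', hm', rfl⟩ := mem_msp_cons' hm
          cases n with
          | zero => exact Or.inr ⟨f, hf, m', hm', by rw [zero_smul, zero_add]⟩
          | succ n' =>
            left
            have hgmem : g ∈ Msp (g :: G) :=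
              AddSubmonoid.subset_closure (List.mem_cons_self)
            have hfU : f ∈ U := hF'U hf
            have hmemT : (f + g) + (n' • g + m') ∈ T :=
              Stab.msp' hT (add_mem (nsmul_mem hgmem n') (msp_mono hm')) _ hfU.2
            have heq : f + ((n' + 1) • g + m') = (f + g) + (n' • g + m') := by
              rw [succ_nsmul]; abel
            exact heq ▸ hmemT
      · exact Or.inl hsT
    obtain ⟨P₂, hP₂⟩ := ih (U ∪ T) T F' (fun t ht => Or.inr ht) hUT'S hTtail
      (fun f hf => Or.inl (hF'U hf)) hcov2
    -- combine
    refine ⟨P₁ - MvPolynomial.monomial g 1 * P₂, ?_⟩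
    have hident := chi_mul_one_sub' S T g hSg hTg
    rw [← hT'] at hident
    have hUfold : {s ∈ S | s + g ∈ T} \ T = (U ∪ T) \ T := by
      rw [hU, Set.union_diff_right]
    rw [hUfold] at hident
    rw [List.map_cons, List.prod_cons, ← mul_assoc, hident, sub_mul, mul_assoc, hP₁, hP₂]
    have hcast : ((P₁ - MvPolynomial.monomial g 1 * P₂ : MvPolynomial (Fin k) ℚ) :
        MvPowerSeries (Fin k) ℚ) = ↑P₁ - (MvPowerSeries.monomial g (1:ℚ)) * ↑P₂ := by
      simp only [← MvPolynomial.coeToMvPowerSeries.ringHom_apply, map_sub, map_mul]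
      rw [show (MvPolynomial.coeToMvPowerSeries.ringHom (MvPolynomial.monomial g (1:ℚ)) :
        MvPowerSeries (Fin k) ℚ) = MvPowerSeries.monomial g (1:ℚ) from by
          rw [MvPolynomial.coeToMvPowerSeries.ringHom_apply, MvPolynomial.coe_monomial]]
    rw [hcast]

theorem structure_lem' (m' : ℕ) (a : Fin m' → Fin k → ℤ) (c : Fin m' → ℤ) :
    ∃ (G : List (Fin k →₀ ℕ)) (F : Finset (Fin k →₀ ℕ)),
      (∀ g ∈ G, g ≠ 0) ∧
      Stab G {x : Fin k →₀ ℕ | ∀ i, 0 ≤ ∑ j, a i j * (x j : ℤ) + c i} ∧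
      ↑F ⊆ {x : Fin k →₀ ℕ | ∀ i, 0 ≤ ∑ j, a i j * (x j : ℤ) + c i} ∧
      (∀ s ∈ {x : Fin k →₀ ℕ | ∀ i, 0 ≤ ∑ j, a i j * (x j : ℤ) + c i},
        ∃ f ∈ F, ∃ m ∈ Msp G, s = f + m) := by
  set A : (Fin k →₀ ℕ) → Fin m' → ℤ := fun x i => ∑ j, a i j * (x j : ℤ) with hA
  set S₀ : Set (Fin k →₀ ℕ) := {x | ∀ i, 0 ≤ A x i + c i} with hS₀
  set M : Set (Fin k →₀ ℕ) := {g | ∀ i, 0 ≤ A g i} with hM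
  have hAadd : ∀ x y, A (x + y) = A x + A y := by
    intro x y
    funext i
    simp only [hA, Pi.add_apply, Finsupp.add_apply]
    rw [← Finset.sum_add_distrib]
    congr 1; funext j; push_cast; ring
  have hAsub : ∀ {f x : Fin k →₀ ℕ}, f ≤ x → A (x - f) = A x - A f := by
    intro f x hfx
    have h1 : (x - f) + f = x := tsub_add_cancel_of_le hfx
    have := hAadd (x - f) f
    rw [h1] at this
    rw [this]; ring
  -- weight function
  set wt : (Fin k →₀ ℕ) → ℕ := fun x => ∑ j, x j with hwt
  have hwtadd : ∀ x y, wt (x + y) = wt x + wt y := by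
    intro x y
    simp only [hwt, Finsupp.add_apply]
    rw [← Finset.sum_add_distrib]
  have hwtpos : ∀ x : Fin k →₀ ℕ, x ≠ 0 → 0 < wt x := by
    intro x hx
    by_contra h
    push_neg at h
    apply hx
    ext j
    have : wt x = 0 := Nat.le_zero.mp h
    have := Finset.sum_eq_zero_iff.mp this j (Finset.mem_univ j)
    simpa using this
  -- stability
  have hstabM : ∀ g ∈ M, ∀ s ∈ S₀, s + g ∈ S₀ := by
    intro g hg s hs i
    rw [hAadd]
    have := hs i; have := hg i
    simp only [Pi.add_apply]
    omega
  -- embeddings into a PWO poset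
  set E := (Fin k →₀ ℕ) × (Fin m' →₀ ℕ) with hE
  have hpwoE : ∀ s : Set E, s.IsPWO := by
    intro s
    have h1 : (Set.univ : Set (Fin k →₀ ℕ)).IsPWO := Set.isPWO_of_wellQuasiOrderedLE _
    have h2 : (Set.univ : Set (Fin m' →₀ ℕ)).IsPWO := Set.isPWO_of_wellQuasiOrderedLE _
    have := h1.prod h2
    rw [Set.univ_prod_univ] at this
    exact this.mono (Set.subset_univ s)
  set toNatF : (Fin m' → ℤ) → (Fin m' →₀ ℕ) :=
    fun v => Finsupp.equivFunOnFinite.symm (fun i => (v i).toNat) with htoNatF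
  have htoNat_le : ∀ v w : Fin m' → ℤ, (∀ i, 0 ≤ v i) → (∀ i, 0 ≤ w i) →
      toNatF v ≤ toNatF w → ∀ i, v i ≤ w i := by
    intro v w hv hw hle i
    have := hle i
    simp only [htoNatF, Finsupp.coe_equivFunOnFinite_symm] at this
    have h1 := hv i; have h2 := hw i
    omega
  have htoNat_le' : ∀ v w : Fin m' → ℤ, (∀ i, v i ≤ w i) → toNatF v ≤ toNatF w := by
    intro v w h i
    simp only [htoNatF, Finsupp.coe_equivFunOnFinite_symm]
    have := h i
    omega
  -- basis for S₀
  set eS : (Fin k →₀ ℕ) → E := fun x => (x, toNatF (fun i => A x i + c i)) with heS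
  obtain ⟨F, hFS, hFcov⟩ := exists_basis' S₀ eS (hpwoE _)
  -- basis for M \ {0}
  set eM : (Fin k →₀ ℕ) → E := fun x => (x, toNatF (A x)) with heM
  obtain ⟨G₀, hG₀M, hG₀cov⟩ := exists_basis' (M \ {0}) eM (hpwoE _)
  set G : List (Fin k →₀ ℕ) := G₀.toList with hG
  have hGmem : ∀ g : Fin k →₀ ℕ, g ∈ G ↔ g ∈ G₀ := fun g => Finset.mem_toList
  have genM : ∀ n : ℕ, ∀ x ∈ M, wt x = n → x ∈ Msp G := by
    intro n
    induction n using Nat.strong_induction_on with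
    | _ n ih =>
      intro x hx hwx
      by_cases hx0 : x = 0
      · rw [hx0]; exact zero_mem _
      · obtain ⟨g, hgG₀, hge⟩ := hG₀cov x ⟨hx, hx0⟩
        obtain ⟨hgM, hg0⟩ := hG₀M hgG₀
        have hg0' : g ≠ 0 := hg0
        have hgle : g ≤ x := hge.1
        have hAgle : ∀ i, A g i ≤ A x i := htoNat_le (A g) (A x) hgM hx hge.2
        have hxmg : x - g ∈ M := by
          intro i
          rw [hAsub hgle]
          simp only [Pi.sub_apply]
          have := hAgle i
          omega
        have hx_eq : x = g + (x - g) := by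
          rw [add_comm, tsub_add_cancel_of_le hgle]
        have hwlt : wt (x - g) < n := by
          have h1 : wt x = wt g + wt (x - g) := by
            conv_lhs => rw [hx_eq]
            exact hwtadd _ _
          have h2 := hwtpos g hg0'
          omega
        have hmem := ih _ hwlt (x - g) hxmg rfl
        rw [hx_eq]
        exact add_mem (AddSubmonoid.subset_closure ((hGmem g).mpr hgG₀)) hmem
  refine ⟨G, F, ?_, ?_, hFS, ?_⟩
  · intro g hg
    exact (hG₀M ((hGmem g).mp hg)).2
  · intro g hg s hs
    exact hstabM g (hG₀M ((hGmem g).mp hg)).1 s hs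
  · intro s hs
    obtain ⟨f, hf, hfe⟩ := hFcov s hs
    have hfle : f ≤ s := hfe.1
    have hfS : f ∈ S₀ := hFS hf
    have hAfle : ∀ i, A f i + c i ≤ A s i + c i :=
      htoNat_le _ _ hfS hs hfe.2
    refine ⟨f, hf, s - f, ?_, ?_⟩
    · refine genM (wt (s - f)) _ ?_ rfl
      intro i
      rw [hAsub hfle]
      simp only [Pi.sub_apply]
      have := hAfle i
      omega
    · rw [add_comm, tsub_add_cancel_of_le hfle]

end Stmt9

/-- The characteristic series of the set of nonnegative integer solutions of a
system of linear Diophantine inequalities is a nice rational function. -/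
theorem stmt_9 (m k : ℕ) (a : Fin m → Fin k → ℤ) (c : Fin m → ℤ) :
    ∃ (n : ℕ) (α : Fin n → (Fin k → ℕ)) (P : MvPolynomial (Fin k) ℚ),
      (∀ i, α i ≠ 0) ∧
      charSeries k {x | ∀ i, 0 ≤ ∑ j, a i j * (x j : ℤ) + c i} *
        ∏ i : Fin n,
          (1 - MvPowerSeries.monomial (Finsupp.equivFunOnFinite.symm (α i)) (1 : ℚ))
      = (P : MvPowerSeries (Fin k) ℚ) := by
  classical
  obtain ⟨G, F, hG0, hstab, hFS, hcov⟩ := Stmt9.structure_lem' m a c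
  set S₀ : Set (Fin k →₀ ℕ) := {x | ∀ i, 0 ≤ ∑ j, a i j * (x j : ℤ) + c i} with hS₀
  obtain ⟨P, hP⟩ := Stmt9.main G S₀ ∅ F (Set.empty_subset _) hstab
    (fun _ _ x hx => absurd hx (Set.notMem_empty x)) hFS
    (fun s hs => Or.inr (hcov s hs))
  rw [Set.diff_empty] at hP
  refine ⟨G.length, fun i => ⇑(G.get i), P, ?_, ?_⟩
  · intro i h
    apply hG0 (G.get i) (G.get_mem _)
    ext j
    have := congrFun h j
    simpa using this
  · have hchar : charSeries k {x | ∀ i, 0 ≤ ∑ j, a i j * (x j : ℤ) + c i}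
        = Stmt9.chi k S₀ := rfl
    rw [hchar]
    have hprod : (∏ i : Fin G.length,
        (1 - MvPowerSeries.monomial
          (Finsupp.equivFunOnFinite.symm (⇑(G.get i))) (1:ℚ)))
        = (G.map (fun g => 1 - MvPowerSeries.monomial g (1:ℚ))).prod := by
      have h1 : ∀ i : Fin G.length,
          Finsupp.equivFunOnFinite.symm (⇑(G.get i)) = G.get i := by
        intro i; exact Finsupp.equivFunOnFinite_symm_coe _
      simp_rw [h1]
      rw [show G.map (fun g => 1 - MvPowerSeries.monomial g (1:ℚ))
            = List.ofFn (fun i => 1 - MvPowerSeries.monomial (G.get i) (1:ℚ)) from by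
          conv_lhs => rw [← List.ofFn_get G]
          rw [List.map_ofFn]
          rfl]
      rw [List.prod_ofFn]
    rw [hprod, hP]
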